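/- Let c < d be real numbers and let H : ℝ² × [c,d] → ℝ be a C¹ function (smooth in the sense of extending to an open neighborhood) which is ℤ²-periodic in the first two variables, i.e., H(x+1, y, t) = H(x, y+1, t) = H(x, y, t) for all (x,y,t). Suppose that sin(t)·∂H/∂x(x,y,t) + cos(t)·∂H/∂y(x,y,t) = 0 for all (x,y,t) ∈ ℝ² × [c,d]. Then ∂H/∂x and ∂H/∂y vanish identically on ℝ² × [c,d]; equivalently, H(x,y,t) = H(0,0,t) depends only on t. -/

import Mathlib

noncomputable section

abbrev V3 : Type := ℝ × ℝ × ℝ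

/-- A continuous function on `ℝ` with two periods with irrational ratio is constant. -/
lemma const_of_two_periods (g : ℝ → ℝ) (hg : Continuous g) (a b : ℝ) (hb : b ≠ 0)
    (hirr : ∀ q : ℚ, a ≠ (q : ℝ) * b) (hpa : ∀ u, g (u + a) = g u)
    (hpb : ∀ u, g (u + b) = g u) : ∀ u, g u = g 0 := by
  set T : AddSubgroup ℝ :=
    { carrier := {p : ℝ | ∀ u, g (u + p) = g u}
      zero_mem' := fun u => by simp
      add_mem' := by
        intro p q hp hq u
        rw [← add_assoc, hq, hp]
      neg_mem' := by
        intro p hp u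
        have h := hp (u + -p)
        simp only [add_assoc, neg_add_cancel, add_zero] at h
        exact h.symm } with hT
  have hST : AddSubgroup.closure {a, b} ≤ T := by
    rw [AddSubgroup.closure_le]
    intro x hx
    simp only [Set.mem_insert_iff, Set.mem_singleton_iff] at hx
    rcases hx with rfl | rfl
    · exact hpa
    · exact hpb
  rcases AddSubgroup.dense_or_cyclic (AddSubgroup.closure {a, b}) with hdense | ⟨r, hr⟩
  · have heqon : Set.EqOn g (fun _ => g 0) ((AddSubgroup.closure {a, b} : AddSubgroup ℝ) : Set ℝ) := by
      intro s hs
      have h := hST hs 0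
      simpa using h
    have h := Continuous.ext_on hdense hg continuous_const heqon
    intro u; exact congrFun h u
  · exfalso
    have haS : a ∈ AddSubgroup.closure ({a, b} : Set ℝ) :=
      AddSubgroup.subset_closure (by simp)
    have hbS : b ∈ AddSubgroup.closure ({a, b} : Set ℝ) :=
      AddSubgroup.subset_closure (by simp)
    rw [hr, AddSubgroup.mem_closure_singleton] at haS hbS
    obtain ⟨m, hm⟩ := haS
    obtain ⟨n, hn⟩ := hbS
    have hn0 : n ≠ 0 := by
      rintro rfl
      simp only [zero_zsmul] at hn
      exact hb hn.symm
    apply hirr ((m : ℚ) / (n : ℚ))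
    have hnR : (n : ℝ) ≠ 0 := Int.cast_ne_zero.mpr hn0
    rw [← hm, ← hn]
    push_cast [zsmul_eq_mul]
    field_simp

/-- The set of bad times is countable. -/
lemma badCountable :
    (({t : ℝ | Real.cos t = 0} ∪ ⋃ q : ℚ, {t : ℝ | Real.sin t = (q : ℝ) * Real.cos t})).Countable := by
  apply Set.Countable.union
  · apply Set.Countable.mono _ (Set.countable_range fun k : ℤ => (2 * (k : ℝ) + 1) * Real.pi / 2)
    intro t ht
    rw [Set.mem_setOf_eq, Real.cos_eq_zero_iff] at ht
    obtain ⟨k, hk⟩ := ht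
    exact ⟨k, hk.symm⟩
  · apply Set.countable_iUnion
    intro q
    apply Set.Countable.mono _ (Set.countable_range fun k : ℤ => Real.arctan q + (k : ℝ) * Real.pi)
    intro t ht
    rw [Set.mem_setOf_eq] at ht
    have hs : Real.sin (t - Real.arctan q) = 0 := by
      rw [Real.sin_sub, Real.sin_arctan, Real.cos_arctan, ht]
      ring
    rw [Real.sin_eq_zero_iff] at hs
    obtain ⟨n, hn⟩ := hs
    exact ⟨n, show Real.arctan (q : ℝ) + (n : ℝ) * Real.pi = t by linarith⟩

/-- If `H : ℝ² × [c,d] → ℝ` is `C¹` (on an open neighborhood of the slab),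
`ℤ²`-periodic in the first two variables, and satisfies
`sin t · ∂H/∂x + cos t · ∂H/∂y = 0` on `ℝ² × [c,d]`, then `∂H/∂x` and `∂H/∂y` vanish
identically there; equivalently `H(x,y,t) = H(0,0,t)` depends only on `t`. -/
theorem statement3 (c d : ℝ) (hcd : c < d)
    (H : V3 → ℝ) (U : Set V3) (hUopen : IsOpen U)
    (hUsub : {p : V3 | p.2.2 ∈ Set.Icc c d} ⊆ U)
    (hH : ContDiffOn ℝ 1 H U)
    (hperx : ∀ x y t : ℝ, H (x + 1, y, t) = H (x, y, t))
    (hpery : ∀ x y t : ℝ, H (x, y + 1, t) = H (x, y, t))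
    (heq : ∀ p : V3, p.2.2 ∈ Set.Icc c d →
      Real.sin p.2.2 * fderiv ℝ H p (1, 0, 0) + Real.cos p.2.2 * fderiv ℝ H p (0, 1, 0) = 0) :
    (∀ p : V3, p.2.2 ∈ Set.Icc c d →
      fderiv ℝ H p (1, 0, 0) = 0 ∧ fderiv ℝ H p (0, 1, 0) = 0) ∧
    (∀ p : V3, p.2.2 ∈ Set.Icc c d → H p = H (0, 0, p.2.2)) := by
  have hmem : ∀ x y t : ℝ, t ∈ Set.Icc c d → ((x, y, t) : V3) ∈ U := fun x y t ht => hUsub ht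
  have hdiff : ∀ p : V3, p ∈ U → HasFDerivAt H (fderiv ℝ H p) p := fun p hp =>
    ((hH.contDiffAt (hUopen.mem_nhds hp)).differentiableAt one_ne_zero).hasFDerivAt
  have hcont : ∀ p : V3, p ∈ U → ContinuousAt H p := fun p hp => (hdiff p hp).continuousAt
  -- derivative along straight lines in the (x,y) plane
  have hline : ∀ (x y t v1 v2 : ℝ), t ∈ Set.Icc c d → ∀ s : ℝ,
      HasDerivAt (fun s => H (x + s * v1, y + s * v2, t))
        ((fderiv ℝ H (x + s * v1, y + s * v2, t)) (v1, v2, 0)) s := by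
    intro x y t v1 v2 ht s
    have h1 : HasDerivAt (fun s : ℝ => x + s * v1) v1 s := (hasDerivAt_mul_const v1).const_add x
    have h2 : HasDerivAt (fun s : ℝ => y + s * v2) v2 s := (hasDerivAt_mul_const v2).const_add y
    have h3 : HasDerivAt (fun _ : ℝ => t) 0 s := hasDerivAt_const s t
    have hγ : HasDerivAt (fun s : ℝ => ((x + s * v1, y + s * v2, t) : V3))
        ((v1, v2, 0) : V3) s := h1.prodMk (h2.prodMk h3)
    exact (hdiff _ (hmem _ _ _ ht)).comp_hasDerivAt s hγ
  -- the directional derivative along (sin t, cos t) vanishes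
  have hzero : ∀ p : V3, p.2.2 ∈ Set.Icc c d →
      (fderiv ℝ H p) (Real.sin p.2.2, Real.cos p.2.2, 0) = 0 := by
    intro p hp
    have hv : ((Real.sin p.2.2, Real.cos p.2.2, 0) : V3)
        = Real.sin p.2.2 • ((1 : ℝ), (0 : ℝ), (0 : ℝ))
          + Real.cos p.2.2 • ((0 : ℝ), (1 : ℝ), (0 : ℝ)) := by
      simp [Prod.ext_iff]
    rw [hv, map_add, map_smul, map_smul, smul_eq_mul, smul_eq_mul]
    exact heq p hp
  -- H is constant along characteristic lines
  have hlineconst : ∀ t : ℝ, t ∈ Set.Icc c d → ∀ x y s : ℝ,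
      H (x + s * Real.sin t, y + s * Real.cos t, t) = H (x, y, t) := by
    intro t ht x y s
    have hF : ∀ u : ℝ, HasDerivAt
        (fun s => H (x + s * Real.sin t, y + s * Real.cos t, t)) 0 u := by
      intro u
      have h := hline x y t (Real.sin t) (Real.cos t) ht u
      have h0 : (fderiv ℝ H (x + u * Real.sin t, y + u * Real.cos t, t))
          (Real.sin t, Real.cos t, 0) = 0 := hzero (x + u * Real.sin t, y + u * Real.cos t, t) ht
      rwa [h0] at h
    have h := is_const_of_deriv_eq_zero (fun u => (hF u).differentiableAt)
      (fun u => (hF u).deriv) s 0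
    simpa using h
  -- for good times, H(·,·,t) is constant
  have hgood : ∀ t : ℝ, t ∈ Set.Icc c d → Real.cos t ≠ 0 →
      (∀ q : ℚ, Real.sin t ≠ (q : ℝ) * Real.cos t) →
      ∀ x y : ℝ, H (x, y, t) = H (0, 0, t) := by
    intro t ht hb hirr x y
    have hab : Real.sin t ^ 2 + Real.cos t ^ 2 = 1 := Real.sin_sq_add_cos_sq t
    set a := Real.sin t with ha'
    set b := Real.cos t with hb'
    have hgcont : Continuous fun u : ℝ => H (u * b, -(u * a), t) := by
      rw [continuous_iff_continuousAt]
      intro u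
      exact ContinuousAt.comp (hcont (u * b, -(u * a), t) (hmem _ _ _ ht))
        ((by fun_prop : Continuous fun u : ℝ => ((u * b, -(u * a), t) : V3)).continuousAt)
    have hpb : ∀ u : ℝ, H ((u + b) * b, -((u + b) * a), t) = H (u * b, -(u * a), t) := by
      intro u
      have h1 : H (u * b + 1 + (-a) * a, -(u * a) + (-a) * b, t) = H (u * b + 1, -(u * a), t) :=
        hlineconst t ht (u * b + 1) (-(u * a)) (-a)
      have e1 : ((u + b) * b : ℝ) = u * b + 1 + (-a) * a := by linear_combination hab
      have e2 : (-((u + b) * a) : ℝ) = -(u * a) + (-a) * b := by ring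
      rw [e1, e2, h1]
      exact hperx _ _ _
    have hpa : ∀ u : ℝ, H ((u + a) * b, -((u + a) * a), t) = H (u * b, -(u * a), t) := by
      intro u
      have h1 : H (u * b + b * a, (-(u * a) - 1) + b * b, t) = H (u * b, -(u * a) - 1, t) :=
        hlineconst t ht (u * b) (-(u * a) - 1) b
      have e1 : ((u + a) * b : ℝ) = u * b + b * a := by ring
      have e2 : (-((u + a) * a) : ℝ) = (-(u * a) - 1) + b * b := by linear_combination -hab
      have h2 : H (u * b, -(u * a) - 1, t) = H (u * b, -(u * a), t) := by
        have h3 := hpery (u * b) (-(u * a) - 1) t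
        rw [show -(u * a) - 1 + 1 = -(u * a) from by ring] at h3
        exact h3.symm
      rw [e1, e2, h1, h2]
    have hconst := const_of_two_periods (fun u : ℝ => H (u * b, -(u * a), t)) hgcont a b hb hirr
      hpa hpb
    set α := x * a + y * b with hα
    set β := x * b - y * a with hβ
    have h1 : H (β * b + α * a, -(β * a) + α * b, t) = H (β * b, -(β * a), t) :=
      hlineconst t ht (β * b) (-(β * a)) α
    have e1 : (x : ℝ) = β * b + α * a := by rw [hα, hβ]; linear_combination (-x) * hab
    have e2 : (y : ℝ) = -(β * a) + α * b := by rw [hα, hβ]; linear_combination (-y) * hab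
    have h2 : H (β * b, -(β * a), t) = H (0 * b, -(0 * a), t) := hconst β
    have h3 : H (0 * b, -(0 * a), t) = H (0, 0, t) := by norm_num
    rw [e1, e2, h1, h2, h3]
  -- H depends only on t on the slab
  have hMain : ∀ p : V3, p.2.2 ∈ Set.Icc c d → H p = H (0, 0, p.2.2) := by
    rintro ⟨x, y, t⟩ ht
    set B : Set ℝ :=
      {t | Real.cos t = 0} ∪ ⋃ q : ℚ, {t | Real.sin t = (q : ℝ) * Real.cos t} with hB
    have hBdense : Dense Bᶜ := badCountable.dense_compl ℝ
    have hclmem : ∀ s : ℝ, min d (max c s) ∈ Set.Icc c d := fun s =>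
      ⟨le_min hcd.le (le_max_left _ _), min_le_left _ _⟩
    have hclid : ∀ s ∈ Set.Icc c d, min d (max c s) = s := fun s hs => by
      rw [max_eq_right hs.1, min_eq_right hs.2]
    have hk : ∀ z w : ℝ, Continuous fun s : ℝ => H (z, w, min d (max c s)) := by
      intro z w
      rw [continuous_iff_continuousAt]
      intro s
      exact ContinuousAt.comp (hcont (z, w, min d (max c s)) (hmem z w _ (hclmem s)))
        ((by fun_prop : Continuous fun s : ℝ => ((z, w, min d (max c s)) : V3)).continuousAt)
    have hEq : Set.EqOn (fun s : ℝ => H (x, y, min d (max c s)))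
        (fun s : ℝ => H (0, 0, min d (max c s))) (Set.Ioo c d ∩ Bᶜ) := by
      intro s hs
      obtain ⟨hs1, hs2⟩ := hs
      have hs1' : s ∈ Set.Icc c d := Set.Ioo_subset_Icc_self hs1
      have hbne : Real.cos s ≠ 0 := fun h => hs2 (Set.mem_union_left _ h)
      have hirr : ∀ q : ℚ, Real.sin s ≠ (q : ℝ) * Real.cos s := fun q h =>
        hs2 (Set.mem_union_right _ (Set.mem_iUnion.mpr ⟨q, h⟩))
      simp only
      rw [hclid s hs1']
      exact hgood s hs1' hbne hirr x y
    have hcls : Set.Icc c d ⊆ closure (Set.Ioo c d ∩ Bᶜ) := by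
      have h1 : Set.Ioo c d ⊆ closure (Set.Ioo c d ∩ Bᶜ) :=
        hBdense.open_subset_closure_inter isOpen_Ioo
      have h2 := closure_mono h1
      rw [closure_closure] at h2
      calc Set.Icc c d = closure (Set.Ioo c d) := (closure_Ioo hcd.ne).symm
        _ ⊆ _ := h2
    have hfin := (hEq.closure (hk x y) (hk 0 0)) (hcls ht)
    simp only at hfin
    rw [hclid t ht] at hfin
    exact hfin
  refine ⟨?_, hMain⟩
  rintro ⟨x, y, t⟩ ht
  constructor
  · have hfun : (fun s : ℝ => H (x + s * 1, y + s * 0, t)) = fun _ => H (0, 0, t) :=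
      funext fun s => hMain (x + s * 1, y + s * 0, t) ht
    have hzero1 : HasDerivAt (fun s : ℝ => H (x + s * 1, y + s * 0, t)) 0 0 := by
      rw [hfun]; exact hasDerivAt_const 0 _
    have hder1 := hline x y t 1 0 ht 0
    have h := hzero1.unique hder1
    simp only [zero_mul, mul_one, mul_zero, add_zero] at h
    exact h.symm
  · have hfun : (fun s : ℝ => H (x + s * 0, y + s * 1, t)) = fun _ => H (0, 0, t) :=
      funext fun s => hMain (x + s * 0, y + s * 1, t) ht
    have hzero1 : HasDerivAt (fun s : ℝ => H (x + s * 0, y + s * 1, t)) 0 0 := by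
      rw [hfun]; exact hasDerivAt_const 0 _
    have hder1 := hline x y t 0 1 ht 0
    have h := hzero1.unique hder1
    simp only [zero_mul, mul_one, mul_zero, add_zero] at h
    exact h.symm
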